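/- Let X be a complete separable metric space with atomless Borel probability measure P_X, suppose Y contains a point y₀ with ℓ(f̃(x), y₀) > ε for all x in a set E of positive P_X-measure, and let A be any measurable algorithm mapping calibration datasets and inputs to {0,1} that is (ε, α)-conditionally PAC efficient for all distributions with X-marginal P_X. Then for P_X-almost every x ∈ E, P_{D∼P^n}(A(D,x) = 0) ≤ α. -/

import Mathlib

open MeasureTheory
open scoped ENNReal

/-- forward direction of the impossibility theorem: on a complete separable
metric space with atomless `P_X`, if there is `y₀` with `ℓ(f̃(x), y₀) > ε` on a set `E` of
positive measure, and the routing algorithm `A` is `(ε, α)`-conditionally PAC efficient for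
all distributions with `X`-marginal `P_X` (in the paper's framework a distribution on
`X × Y` with marginal `P_X` is given by an expert function `f'`, labels `y = f'(x)`), then
for `P_X`-a.e. `x ∈ E` the deferral probability `P_{D∼Pⁿ}(A(D,x)=0)` is at most `α`,
where `P` is the data distribution induced by the (fixed) expert `f`. -/
theorem stmt14 {X Y : Type*} [MetricSpace X] [CompleteSpace X]
    [TopologicalSpace.SeparableSpace X] [MeasurableSpace X] [BorelSpace X]
    [MeasurableSpace Y]
    (PX : Measure X) [IsProbabilityMeasure PX] [NullSingletonClass PX]
    (ftil : X → Y) (ℓ : Y → Y → ℝ) (hℓ : ∀ y y', 0 ≤ ℓ y y') (ε α : ℝ) (hε : 0 ≤ ε)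
    (E : Set X) (hE : MeasurableSet E) (hEpos : 0 < PX E)
    (y₀ : Y) (hy₀ : ∀ x ∈ E, ℓ (ftil x) y₀ > ε)
    (n : ℕ) (A : (Fin n → X × Y) → X → Bool)
    (hA : Measurable fun p : (Fin n → X × Y) × X => A p.1 p.2)
    (f : X → Y) (hf : Measurable f)
    (hPAC : ∀ f' : X → Y, Measurable f' →
      ∀ᵐ x ∂PX,
        ((Measure.pi (fun _ : Fin n => PX.map (fun x' => (x', f' x'))))
          {D | (if A D x then (0 : ℝ) else ℓ (ftil x) (f' x)) > ε}).toReal ≤ α) :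
    ∀ᵐ x ∂PX, x ∈ E →
      ((Measure.pi (fun _ : Fin n => PX.map (fun x' => (x', f x'))))
        {D | A D x = false}).toReal ≤ α := by
  classical
  have hXne : Nonempty X := ⟨(nonempty_of_measure_ne_zero hEpos.ne').choose⟩
  set u : ℕ → X := TopologicalSpace.denseSeq X with hu_def
  have hu : DenseRange u := TopologicalSpace.denseRange_denseSeq X
  -- the perturbed expert functions
  set F : ℕ → ℕ → X → Y := fun i k x' =>
    if x' ∈ Metric.ball (u i) (1 / (k + 1)) then y₀ else f x' with hF_def
  have hFmeas : ∀ i k, Measurable (F i k) := fun i k =>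
    Measurable.ite measurableSet_ball measurable_const hf
  have hPAC' : ∀ᵐ x ∂PX, ∀ i k : ℕ,
      ((Measure.pi (fun _ : Fin n => PX.map (fun x' => (x', F i k x'))))
        {D | (if A D x then (0 : ℝ) else ℓ (ftil x) (F i k x)) > ε}).toReal ≤ α := by
    rw [ae_all_iff]
    intro i
    rw [ae_all_iff]
    intro k
    exact hPAC (F i k) (hFmeas i k)
  filter_upwards [hPAC'] with x hx hxE
  -- abbreviations
  set μn : Measure (Fin n → X) := Measure.pi (fun _ => PX) with hμn_def
  set Pn : Measure (Fin n → X × Y) :=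
    Measure.pi (fun _ : Fin n => PX.map (fun x' => (x', f x'))) with hPn_def
  set S : Set (Fin n → X × Y) := {D | A D x = false} with hS_def
  have hSmeas : MeasurableSet S := by
    have h1 : Measurable fun D : Fin n → X × Y => A D x :=
      hA.comp (measurable_id.prodMk measurable_const)
    exact h1 (measurableSet_singleton false)
  have hPmap : ∀ g : X → Y, Measurable g →
      IsProbabilityMeasure (PX.map (fun x' => (x', g x'))) := fun g hg =>
    Measure.isProbabilityMeasure_map (measurable_id.prodMk hg).aemeasurable
  haveI := hPmap f hf
  -- measure-preserving map from μn to Pn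
  have hmpG : MeasurePreserving (fun (ω : Fin n → X) i => (ω i, f (ω i))) μn Pn :=
    measurePreserving_pi _ _ (fun _ => ⟨measurable_id.prodMk hf, rfl⟩)
  -- key estimate for each k
  have key : ∀ k : ℕ, (Pn S).toReal ≤
      α + n * (PX (Metric.closedBall x (2 / (k + 1)))).toReal := by
    intro k
    have hkpos : (0 : ℝ) < 1 / (k + 1) := by positivity
    obtain ⟨i, hi⟩ := hu.exists_dist_lt x hkpos
    set B : Set X := Metric.ball (u i) (1 / (k + 1)) with hB_def
    have hxB : x ∈ B := by
      rw [hB_def, Metric.mem_ball]; exact hi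
    have hBsub : B ⊆ Metric.closedBall x (2 / (k + 1)) := by
      intro y hy
      rw [Metric.mem_closedBall]
      have h1 : dist y (u i) < 1 / (k + 1) := hy
      have h2 : dist (u i) x < 1 / (k + 1) := by rw [dist_comm]; exact hi
      have h3 := dist_triangle y (u i) x
      have h4 : (1 : ℝ) / (k + 1) + 1 / (k + 1) = 2 / (k + 1) := by ring
      linarith
    haveI := hPmap (F i k) (hFmeas i k)
    set P'n : Measure (Fin n → X × Y) :=
      Measure.pi (fun _ : Fin n => PX.map (fun x' => (x', F i k x'))) with hP'n_def
    have hmpG' : MeasurePreserving (fun (ω : Fin n → X) i' => (ω i', F i k (ω i'))) μn P'n :=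
      measurePreserving_pi _ _ (fun _ => ⟨measurable_id.prodMk (hFmeas i k), rfl⟩)
    -- S is contained in the error event for F i k
    have hST : S ⊆ {D | (if A D x then (0 : ℝ) else ℓ (ftil x) (F i k x)) > ε} := by
      intro D hD
      have hDA : A D x = false := hD
      simp only [Set.mem_setOf_eq, hDA, if_false]
      have : F i k x = y₀ := if_pos hxB
      rw [this]
      exact hy₀ x hxE
    -- pull back to μn and compare
    have hPnS : Pn S = μn ((fun (ω : Fin n → X) i => (ω i, f (ω i))) ⁻¹' S) :=
      (hmpG.measure_preimage hSmeas.nullMeasurableSet).symm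
    have hP'nS : P'n S = μn ((fun (ω : Fin n → X) i' => (ω i', F i k (ω i'))) ⁻¹' S) :=
      (hmpG'.measure_preimage hSmeas.nullMeasurableSet).symm
    have hsub : (fun (ω : Fin n → X) i => (ω i, f (ω i))) ⁻¹' S ⊆
        ((fun (ω : Fin n → X) i' => (ω i', F i k (ω i'))) ⁻¹' S) ∪
          ⋃ i' : Fin n, Function.eval i' ⁻¹' B := by
      intro ω hω
      by_cases hcase : ∃ i' : Fin n, ω i' ∈ B
      · obtain ⟨i', hi'⟩ := hcase
        exact Or.inr (Set.mem_iUnion.2 ⟨i', hi'⟩)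
      · push_neg at hcase
        left
        have : (fun i' => (ω i', F i k (ω i'))) = fun i => (ω i, f (ω i)) := by
          funext i'
          have : F i k (ω i') = f (ω i') := if_neg (hcase i')
          rw [this]
        rw [Set.mem_preimage, this]
        exact hω
    have heval : ∀ i' : Fin n, μn (Function.eval i' ⁻¹' B) = PX B := by
      intro i'
      rw [hμn_def, Set.eval_preimage, Measure.pi_pi]
      simp_rw [Function.apply_update (fun _ s => PX s)]
      rw [Finset.prod_update_of_mem (Finset.mem_univ i')]
      simp
    have hunion : μn (⋃ i' : Fin n, Function.eval i' ⁻¹' B) ≤ n * PX B := by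
      calc μn (⋃ i' : Fin n, Function.eval i' ⁻¹' B) ≤ ∑' i' : Fin n, μn (Function.eval i' ⁻¹' B) :=
            measure_iUnion_le _
        _ = ∑ i' : Fin n, μn (Function.eval i' ⁻¹' B) := tsum_fintype _
        _ = n * PX B := by simp [heval]
    have hmain : Pn S ≤ P'n S + n * PX B := by
      rw [hPnS, hP'nS]
      calc μn ((fun (ω : Fin n → X) i => (ω i, f (ω i))) ⁻¹' S)
          ≤ μn (((fun (ω : Fin n → X) i' => (ω i', F i k (ω i'))) ⁻¹' S) ∪
            ⋃ i' : Fin n, Function.eval i' ⁻¹' B) := measure_mono hsub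
        _ ≤ μn ((fun (ω : Fin n → X) i' => (ω i', F i k (ω i'))) ⁻¹' S) +
            μn (⋃ i' : Fin n, Function.eval i' ⁻¹' B) := measure_union_le _ _
        _ ≤ _ + n * PX B := add_le_add le_rfl hunion
    haveI : IsProbabilityMeasure P'n := by rw [hP'n_def]; infer_instance
    have hP'nT : (P'n S).toReal ≤ α := by
      refine le_trans ?_ (hx i k)
      exact ENNReal.toReal_mono (measure_ne_top _ _) (measure_mono hST)
    have hfin1 : P'n S ≠ ⊤ := measure_ne_top _ _
    have hfin2 : (n : ℝ≥0∞) * PX B ≠ ⊤ :=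
      ENNReal.mul_ne_top (ENNReal.natCast_ne_top n) (measure_ne_top _ _)
    calc (Pn S).toReal ≤ (P'n S + n * PX B).toReal :=
          ENNReal.toReal_mono (by finiteness) hmain
      _ = (P'n S).toReal + ((n : ℝ≥0∞) * PX B).toReal := ENNReal.toReal_add hfin1 hfin2
      _ = (P'n S).toReal + n * (PX B).toReal := by
          rw [ENNReal.toReal_mul, ENNReal.toReal_natCast]
      _ ≤ α + n * (PX (Metric.closedBall x (2 / (k + 1)))).toReal := by
          refine add_le_add hP'nT ?_
          exact mul_le_mul_of_nonneg_left
            (ENNReal.toReal_mono (measure_ne_top PX _) (measure_mono hBsub))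
            (Nat.cast_nonneg n)
  -- take the limit k → ∞
  have hlim : Filter.Tendsto (fun k : ℕ =>
      α + n * (PX (Metric.closedBall x (2 / (k + 1)))).toReal)
      Filter.atTop (nhds α) := by
    have hanti : Antitone (fun k : ℕ => Metric.closedBall x (2 / (k + 1))) := by
      intro a b hab
      apply Metric.closedBall_subset_closedBall
      gcongr
    have hiInter : (⋂ k : ℕ, Metric.closedBall x (2 / (k + 1))) = {x} := by
      apply Set.Subset.antisymm
      · intro y hy
        simp only [Set.mem_iInter, Metric.mem_closedBall] at hy
        have hdist : dist y x ≤ 0 := by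
          by_contra h
          push_neg at h
          obtain ⟨k, hk⟩ := exists_nat_gt (2 / dist y x)
          have hk1 : (2 : ℝ) / (k + 1) < dist y x := by
            rw [div_lt_iff₀ (by positivity)]
            rw [div_lt_iff₀ h] at hk
            nlinarith
          exact absurd (hy k) (not_le.2 hk1)
        exact dist_le_zero.mp hdist
      · intro y hy
        simp only [Set.mem_singleton_iff] at hy
        subst hy
        simp only [Set.mem_iInter, Metric.mem_closedBall, dist_self]
        intro k
        positivity
    have h0 : Filter.Tendsto (fun k : ℕ => PX (Metric.closedBall x (2 / (k + 1))))
        Filter.atTop (nhds 0) := by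
      have := tendsto_measure_iInter_atTop (μ := PX)
        (s := fun k : ℕ => Metric.closedBall x (2 / (k + 1)))
        (fun k => Metric.isClosed_closedBall.measurableSet.nullMeasurableSet) hanti
        ⟨0, measure_ne_top _ _⟩
      rw [hiInter] at this
      simpa [measure_singleton, Function.comp_def] using this
    have h0' : Filter.Tendsto (fun k : ℕ => (PX (Metric.closedBall x (2 / (k + 1)))).toReal)
        Filter.atTop (nhds 0) := by
      have := (ENNReal.tendsto_toReal (by simp : (0 : ℝ≥0∞) ≠ ⊤)).comp h0
      simpa [Function.comp_def] using this
    have := ((h0'.const_mul (n : ℝ)).const_add α)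
    simpa using this
  exact ge_of_tendsto' hlim key
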